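/- Let M ≥ 1 be a real number. Then for every real polynomial p of degree at most 2⌊M⌋ − 1, sup_{t ∈ [−1,1]} |cos(Mπt) − p(t)| ≥ 1. Consequently the best minimax polynomial approximation of degree ≤ 2⌊M⌋ − 1 to cos(Mπt) on [−1,1] is the zero polynomial. -/

import Mathlib

/-- Claim in Section 3.3.1 of the paper: for `M ≥ 1`, every real polynomial of
degree at most `2⌊M⌋ − 1` has minimax error at least `1` when approximating
`cos(Mπt)` on `[−1,1]`; hence the best such approximation is the zero
polynomial. -/
theorem cos_best_approx_zero
    (M : ℝ) (hM : 1 ≤ M) (p : Polynomial ℝ)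
    (hp : p.natDegree ≤ 2 * ⌊M⌋₊ - 1) :
    1 ≤ ⨆ t : Set.Icc (-1 : ℝ) 1, |Real.cos (M * Real.pi * t) - p.eval (t : ℝ)| := by
  by_contra hcon
  push_neg at hcon
  set n := ⌊M⌋₊ with hn
  have hM0 : (0:ℝ) < M := lt_of_lt_of_le one_pos hM
  have hn1 : 1 ≤ n := Nat.le_floor (by exact_mod_cast hM)
  have hnM : (n:ℝ) ≤ M := Nat.floor_le hM0.le
  -- the sup bounds every value
  set f : Set.Icc (-1:ℝ) 1 → ℝ :=
    fun t => |Real.cos (M * Real.pi * t) - p.eval (t : ℝ)| with hf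
  have hfc : Continuous f := by
    apply Continuous.abs
    exact ((Real.continuous_cos.comp
      (continuous_const.mul continuous_subtype_val)).sub
      (p.continuous.comp continuous_subtype_val))
  have hbdd : BddAbove (Set.range f) := (isCompact_range hfc).bddAbove
  have hlt : ∀ t : Set.Icc (-1:ℝ) 1, f t < 1 :=
    fun t => lt_of_le_of_lt (le_ciSup hbdd t) hcon
  -- equioscillation points
  set s : ℕ → ℝ := fun j => ((j:ℝ) - n) / M with hs
  have hsmono : StrictMono s := by
    intro a b hab
    have hab' : (a:ℝ) < b := by exact_mod_cast hab
    simp only [hs]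
    gcongr
  have hmem : ∀ j ≤ 2*n, s j ∈ Set.Icc (-1:ℝ) 1 := by
    intro j hj
    have hj' : (j:ℝ) ≤ 2*n := by exact_mod_cast hj
    have h0 : (0:ℝ) ≤ j := Nat.cast_nonneg j
    constructor
    · rw [le_div_iff₀ hM0]; nlinarith
    · rw [div_le_one hM0]; nlinarith
  have hcos : ∀ j : ℕ, Real.cos (M * Real.pi * s j) = (-1:ℝ)^(n + j) := by
    intro j
    have h1 : M * Real.pi * s j = (((j:ℤ) - (n:ℤ) : ℤ) : ℝ) * Real.pi := by
      simp only [hs]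
      push_cast
      field_simp
    rw [h1]
    have hc := Real.cos_int_mul_pi_sub 0 ((j:ℤ) - (n:ℤ))
    simp only [sub_zero, Real.cos_zero, mul_one] at hc
    rw [hc]
    have h2 : ((j:ℤ) - (n:ℤ)) = ((n + j : ℕ) : ℤ) + (-2) * (n:ℤ) := by push_cast; ring
    rw [h2, zpow_add₀ (by norm_num : (-1:ℝ) ≠ 0), zpow_natCast]
    have : ((-1:ℝ)) ^ ((-2) * (n:ℤ)) = 1 := by
      rw [zpow_mul]
      norm_num
    rw [this, mul_one]
  have hsign : ∀ j ≤ 2*n, 0 < (-1:ℝ)^(n + j) * p.eval (s j) := by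
    intro j hj
    have h1 := hlt ⟨s j, hmem j hj⟩
    simp only [hf] at h1
    rw [hcos j] at h1
    set ε : ℝ := (-1:ℝ)^(n + j) with hε
    have hε2 : ε^2 = 1 := by
      rw [hε, ← pow_mul, mul_comm, pow_mul]; norm_num
    rw [abs_lt] at h1
    nlinarith [sq_nonneg (p.eval (s j)), h1.1, h1.2]
  have hne : p ≠ 0 := by
    intro h0
    have := hsign n (by omega)
    rw [h0] at this
    simp at this
  -- roots between consecutive points
  have hroot : ∀ j : Fin (2*n), ∃ r, r ∈ Set.Ioo (s j) (s (j+1)) ∧ p.eval r = 0 := by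
    intro ⟨j, hj⟩
    simp only
    have h1 := hsign j (by omega)
    have h2 := hsign (j+1) (by omega)
    have hflip : ((-1:ℝ))^(n + (j+1)) = -((-1:ℝ))^(n + j) := by
      rw [show n + (j+1) = (n+j) + 1 by ring, pow_succ]; ring
    rw [hflip] at h2
    have hab : s j ≤ s (j+1) := (hsmono (by omega)).le
    have hpc : ContinuousOn (fun x => p.eval x) (Set.Icc (s j) (s (j+1))) :=
      p.continuous.continuousOn
    rcases neg_one_pow_eq_or ℝ (n + j) with hε | hε <;> rw [hε] at h1 h2
    · have h0 : (0:ℝ) ∈ Set.Ioo (p.eval (s (j+1))) (p.eval (s j)) := by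
        constructor <;> nlinarith
      obtain ⟨r, hr, hr0⟩ := intermediate_value_Ioo' hab hpc h0
      exact ⟨r, hr, hr0⟩
    · have h0 : (0:ℝ) ∈ Set.Ioo (p.eval (s j)) (p.eval (s (j+1))) := by
        constructor <;> nlinarith
      obtain ⟨r, hr, hr0⟩ := intermediate_value_Ioo hab hpc h0
      exact ⟨r, hr, hr0⟩
  choose r hr1 hr2 using hroot
  have hrinj : Function.Injective r := by
    have key : ∀ i j : Fin (2*n), i < j → r i < r j := by
      intro i j hij
      have h1 : r i < s (i+1) := (hr1 i).2
      have h2 : s j ≤ r j := ((hr1 j).1).le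
      have h3 : s (i+1) ≤ s (j:ℕ) := hsmono.monotone (by omega)
      linarith
    intro i j hij
    by_contra hne'
    rcases lt_or_gt_of_ne hne' with h | h
    · exact absurd hij (key i j h).ne
    · exact absurd hij.symm (key j i h).ne
  have hcard : 2*n ≤ p.roots.card := by
    have hsub : Finset.image r Finset.univ ⊆ p.roots.toFinset := by
      intro x hx
      simp only [Finset.mem_image] at hx
      obtain ⟨i, _, rfl⟩ := hx
      rw [Multiset.mem_toFinset, Polynomial.mem_roots hne]
      exact hr2 i
    calc 2*n = (Finset.image r Finset.univ).card := by
            rw [Finset.card_image_of_injective _ hrinj, Finset.card_univ, Fintype.card_fin]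
      _ ≤ p.roots.toFinset.card := Finset.card_le_card hsub
      _ ≤ p.roots.card := p.roots.toFinset_card_le
  have := p.card_roots' 
  omega
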